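/- Let m ≥ 3 be odd, q = 2cos(π/(2m)), c = ⌊(m+1)/4⌋. If a ∈ Z/mZ with a ≢ ±c mod m, then |ω^a - ω^{-a}| ≤ 2cos(3π/(2m)), and moreover 2cos(3π/(2m)) ≤ q^9/2^8. -/

import Mathlib

open Real

theorem stmt_8 (m : ℕ) [NeZero m] (hm : 3 ≤ m) (hodd : Odd m) (a : ZMod m)
    (ha : a ≠ (((m + 1) / 4 : ℕ) : ZMod m) ∧ a ≠ -(((m + 1) / 4 : ℕ) : ZMod m)) :
    ‖Complex.exp (2 * (Real.pi : ℂ) * Complex.I / m) ^ (a.val : ℤ) -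
        Complex.exp (2 * (Real.pi : ℂ) * Complex.I / m) ^ (-(a.val : ℤ))‖ ≤
      2 * Real.cos (3 * Real.pi / (2 * m)) ∧
    2 * Real.cos (3 * Real.pi / (2 * m)) ≤ (2 * Real.cos (Real.pi / (2 * m))) ^ 9 / 2 ^ 8 := by
  have hm0 : (0:ℝ) < m := by positivity
  have hmR : (3:ℝ) ≤ m := by exact_mod_cast hm
  have hπ := Real.pi_pos
  constructor
  · -- part 1
    set v := a.val with hvdef
    have hvlt : v < m := a.val_lt
    have hva : ((v : ℕ) : ZMod m) = a := by
      rw [hvdef, ZMod.natCast_val, ZMod.cast_id]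
    have hc1 : v ≠ (m+1)/4 := by
      intro h
      exact ha.1 (by rw [← hva, h])
    have hc2 : v ≠ m - (m+1)/4 := by
      intro h
      apply ha.2
      rw [← hva, h]
      have hle : (m+1)/4 ≤ m := by omega
      push_cast [Nat.cast_sub hle]
      simp
    set r := (2*v) % m with hrdef
    have hsplit : (2*v < m ∧ r = 2*v) ∨ (m ≤ 2*v ∧ r = 2*v - m) := by
      rcases Nat.lt_or_ge (2*v) m with h | h
      · exact Or.inl ⟨h, by rw [hrdef, Nat.mod_eq_of_lt h]⟩
      · refine Or.inr ⟨h, ?_⟩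
        rw [hrdef, Nat.mod_eq_sub_mod h, Nat.mod_eq_of_lt (by omega)]
    obtain ⟨k, hk⟩ := hodd
    set j := min r (m - r) with hjdef
    have hj3 : 2*j + 3 ≤ m := by omega
    have hrm : r ≤ m := by omega
    -- rewrite complex expression
    have key : Complex.exp (2 * (Real.pi : ℂ) * Complex.I / m) ^ (v : ℤ) -
        Complex.exp (2 * (Real.pi : ℂ) * Complex.I / m) ^ (-(v : ℤ)) =
        2 * Real.sin (2 * Real.pi * v / m) * Complex.I := by
      rw [← Complex.exp_int_mul, ← Complex.exp_int_mul]
      have e1 : ((v:ℤ):ℂ) * (2 * (Real.pi : ℂ) * Complex.I / m)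
          = ((2 * Real.pi * v / m : ℝ) : ℂ) * Complex.I := by
        push_cast
        ring
      have e2 : (((-(v:ℤ) : ℤ)):ℂ) * (2 * (Real.pi : ℂ) * Complex.I / m)
          = ((-(2 * Real.pi * v / m) : ℝ) : ℂ) * Complex.I := by
        push_cast
        ring
      rw [e1, e2, Complex.exp_mul_I, Complex.exp_mul_I, Complex.ofReal_neg,
        Complex.cos_neg, Complex.sin_neg, Complex.ofReal_sin]
      ring
    rw [key]
    have habs : ‖(2 * (Real.sin (2 * Real.pi * v / m) : ℝ) * Complex.I : ℂ)‖
        = 2 * |Real.sin (2 * Real.pi * v / m)| := by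
      rw [norm_mul, norm_mul, Complex.norm_I, Complex.norm_real, Real.norm_eq_abs]
      norm_num
    rw [habs]
    -- now the trig bound
    have hsinr : 0 ≤ Real.sin (Real.pi * r / m) := by
      apply Real.sin_nonneg_of_nonneg_of_le_pi
      · positivity
      · rw [div_le_iff₀ hm0]
        have : (r:ℝ) ≤ m := by exact_mod_cast hrm
        nlinarith
    have habs1 : |Real.sin (2 * Real.pi * v / m)| = |Real.sin (Real.pi * r / m)| := by
      have hrow : (2:ℝ) * Real.pi * v / m = Real.pi * (2*v : ℕ) / m := by
        push_cast; ring
      rcases hsplit with ⟨h, hr⟩ | ⟨h, hr⟩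
      · rw [hrow, hr]
      · have hcast : (r:ℝ) = 2*v - m := by
          rw [hr, Nat.cast_sub h]
          push_cast; ring
        have : (2:ℝ) * Real.pi * v / m = Real.pi * r / m + Real.pi := by
          rw [hcast]
          field_simp
          ring
        rw [this, Real.sin_add_pi, abs_neg]
    have habs2 : |Real.sin (Real.pi * r / m)| = Real.sin (Real.pi * j / m) := by
      rcases le_total r (m - r) with h | h
      · rw [hjdef, min_eq_left h, abs_of_nonneg hsinr]
      · rw [hjdef, min_eq_right h]
        have hcast : ((m - r : ℕ):ℝ) = m - r := by
          rw [Nat.cast_sub hrm]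
        have : Real.pi * ((m - r : ℕ):ℝ) / m = Real.pi - Real.pi * r / m := by
          rw [hcast]
          field_simp
        rw [this, Real.sin_pi_sub, abs_of_nonneg hsinr]
    have hmono : Real.sin (Real.pi * j / m) ≤ Real.cos (3 * Real.pi / (2*m)) := by
      rw [← Real.sin_pi_div_two_sub]
      apply Real.sin_le_sin_of_le_of_le_pi_div_two
      · have : 0 ≤ Real.pi * j / m := by positivity
        linarith
      · have : 0 ≤ 3 * Real.pi / (2*m) := by positivity
        linarith
      · have hjm : 2*(j:ℝ) + 3 ≤ m := by exact_mod_cast hj3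
        have hkey : Real.pi/2 - 3*Real.pi/(2*m) - Real.pi * j / m
            = Real.pi * ((m:ℝ) - 3 - 2*j) / (2*m) := by
          field_simp
        have : 0 ≤ Real.pi * ((m:ℝ) - 3 - 2*j) / (2*m) :=
          div_nonneg (mul_nonneg hπ.le (by linarith)) (by positivity)
        linarith
    calc 2 * |Real.sin (2 * Real.pi * v / m)|
        = 2 * Real.sin (Real.pi * j / m) := by rw [habs1, habs2]
      _ ≤ 2 * Real.cos (3 * Real.pi / (2*m)) := by linarith
  · -- part 2
    set x := Real.cos (Real.pi / (2*m)) with hx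
    have hx0 : 0 ≤ x := by
      apply Real.cos_nonneg_of_mem_Icc
      constructor
      · have : 0 ≤ Real.pi / (2*m) := by positivity
        linarith
      · rw [div_le_div_iff₀ (by positivity) (by norm_num)]
        nlinarith
    have h3 : Real.cos (3 * Real.pi / (2*m)) = 4 * x^3 - 3 * x := by
      rw [show 3 * Real.pi / (2*m) = 3 * (Real.pi / (2*m)) by ring, Real.cos_three_mul]
    rw [h3]
    have hfact : 0 ≤ x * (x^2 - 1)^2 * (x^4 + 2*x^2 + 3) :=
      mul_nonneg (mul_nonneg hx0 (sq_nonneg _)) (by positivity)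
    nlinarith [hfact]
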